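/- Let n be a nonnegative integer with n ≡ 0 (mod 2). Then r_0(n) = Σ_{k=0}^{n/2} b(k), where b(k) is the number of binary partitions of k (with no divisibility conditions). -/

import Mathlib

/-- The integer partitioned by the binary partition `α`, where `α i` is the
number of parts equal to `2 ^ i` (so `α i` is the `α_{i+1}` of the paper). -/
def binWeight (α : ℕ →₀ ℕ) : ℕ := α.sum fun i a => a * 2 ^ i

/-- `Pm m n` is the set of binary partitions of `n` satisfying the divisibility
conditions `2 ^ (m + 2 - i) ∣ α_i` for `1 ≤ i ≤ m + 1` (written here with the
index shifted down by one).  For `n < 0` the set is empty. -/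
def Pm (m : ℕ) (n : ℤ) : Set (ℕ →₀ ℕ) :=
  {α | (binWeight α : ℤ) = n ∧ ∀ i ≤ m, 2 ^ (m + 1 - i) ∣ α i}

/-- `r m n` is the number of binary partitions of `n` satisfying the divisibility
conditions `2 ^ (m + 2 - i) ∣ α_i` for `1 ≤ i ≤ m + 1`. -/
noncomputable def r (m : ℕ) (n : ℤ) : ℕ := Nat.card (Pm m n)

/-- `b n` is the number of binary partitions of `n` (no divisibility conditions). -/
noncomputable def b (n : ℕ) : ℕ := Nat.card {α : ℕ →₀ ℕ | binWeight α = n}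

noncomputable def tl (α : ℕ →₀ ℕ) : ℕ →₀ ℕ := α.comapDomain Nat.succ (Nat.succ_injective.injOn)

noncomputable def cns (a : ℕ) (β : ℕ →₀ ℕ) : ℕ →₀ ℕ := Finsupp.single 0 a + β.mapDomain Nat.succ

lemma tl_apply (α : ℕ →₀ ℕ) (i : ℕ) : tl α i = α (i + 1) := rfl

lemma cns_zero (a : ℕ) (β : ℕ →₀ ℕ) : cns a β 0 = a := by
  simp [cns, Finsupp.mapDomain_notin_range (f := Nat.succ) β 0 (by simp [Set.range, Nat.succ_ne_zero])]

lemma cns_succ (a : ℕ) (β : ℕ →₀ ℕ) (i : ℕ) : cns a β (i + 1) = β i := by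
  simp [cns, Finsupp.mapDomain_apply Nat.succ_injective]

lemma tl_cns (a : ℕ) (β : ℕ →₀ ℕ) : tl (cns a β) = β := by
  ext i; rw [tl_apply, cns_succ]

lemma cns_tl (α : ℕ →₀ ℕ) : cns (α 0) (tl α) = α := by
  ext i
  cases i with
  | zero => rw [cns_zero]
  | succ j => rw [cns_succ, tl_apply]

lemma binWeight_cns (a : ℕ) (β : ℕ →₀ ℕ) :
    binWeight (cns a β) = a + 2 * binWeight β := by
  unfold binWeight cns
  rw [Finsupp.sum_add_index (by simp) (by intros; ring)]
  rw [Finsupp.sum_single_index (by simp)]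
  rw [Finsupp.sum_mapDomain_index (by simp) (by intros; ring)]
  simp only [pow_zero, mul_one, Finsupp.mul_sum, Nat.succ_eq_add_one]
  congr 1
  exact Finsupp.sum_congr fun i _ => by ring

lemma binWeight_decomp (α : ℕ →₀ ℕ) :
    binWeight α = α 0 + 2 * binWeight (tl α) := by
  conv_lhs => rw [← cns_tl α]
  rw [binWeight_cns]

lemma apply_mul_le (α : ℕ →₀ ℕ) (i : ℕ) : α i * 2 ^ i ≤ binWeight α := by
  by_cases h : i ∈ α.support
  · exact Finset.single_le_sum (f := fun i => α i * 2 ^ i) (fun _ _ => Nat.zero_le _) h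
  · simp [Finsupp.notMem_support_iff.mp h]

lemma setOf_finite (n : ℕ) : {α : ℕ →₀ ℕ | binWeight α = n}.Finite := by
  rw [← Set.finite_coe_iff]
  have key : ∀ α : {α : ℕ →₀ ℕ | binWeight α = n}, ∀ i, (α : ℕ →₀ ℕ) i ≤ n := by
    intro α i
    calc (α : ℕ →₀ ℕ) i ≤ (α : ℕ →₀ ℕ) i * 2 ^ i :=
          Nat.le_mul_of_pos_right _ (Nat.pow_pos (by norm_num))
    _ ≤ binWeight α := apply_mul_le _ i
    _ = n := α.2
  have hz : ∀ α : {α : ℕ →₀ ℕ | binWeight α = n}, ∀ i, n < i → (α : ℕ →₀ ℕ) i = 0 := by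
    intro α i hi
    by_contra h
    have h1 : 2 ^ i ≤ (α : ℕ →₀ ℕ) i * 2 ^ i :=
      Nat.le_mul_of_pos_left _ (Nat.pos_of_ne_zero h)
    have h2 : (α : ℕ →₀ ℕ) i * 2 ^ i ≤ n := by
      have := apply_mul_le (α : ℕ →₀ ℕ) i
      rwa [α.2] at this
    have h3 : n < 2 ^ i := lt_of_lt_of_le (Nat.lt_two_pow_self (n := n)) (Nat.pow_le_pow_right (by norm_num) hi.le)
    omega
  apply Finite.of_injective
    (fun α : {α : ℕ →₀ ℕ | binWeight α = n} =>
      fun i : Fin (n + 1) => (⟨(α : ℕ →₀ ℕ) i, Nat.lt_succ_of_le (key α i)⟩ : Fin (n + 1)))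
  intro α β h
  ext i
  rcases lt_or_ge i (n + 1) with hi | hi
  · have := congrFun h ⟨i, hi⟩
    simpa using congrArg Fin.val this
  · rw [hz α i (by omega), hz β i (by omega)]

theorem stmt4 (n : ℕ) (hn : 2 ∣ n) :
    r 0 n = ∑ k ∈ Finset.range (n / 2 + 1), b k := by
  classical
  have hmem : ∀ α : ℕ →₀ ℕ, α ∈ Pm 0 (n : ℤ) ↔ binWeight α = n ∧ 2 ∣ α 0 := by
    intro α
    constructor
    · rintro ⟨h1, h2⟩
      exact ⟨by exact_mod_cast h1, by simpa using h2 0 le_rfl⟩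
    · rintro ⟨h1, h2⟩
      refine ⟨by exact_mod_cast h1, ?_⟩
      intro i hi
      interval_cases i
      simpa using h2
  have e : Pm 0 (n : ℤ) ≃ Σ k : Fin (n / 2 + 1), {β : ℕ →₀ ℕ // binWeight β = (k : ℕ)} :=
    { toFun := fun α => ⟨⟨binWeight (tl α.1), by
        have h := (hmem α.1).mp α.2
        have hd := binWeight_decomp α.1
        omega⟩, ⟨tl α.1, rfl⟩⟩
      invFun := fun p => ⟨cns (n - 2 * (p.1 : ℕ)) p.2.1, by
        have hk : (p.1 : ℕ) < n / 2 + 1 := p.1.2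
        rw [hmem]
        constructor
        · rw [binWeight_cns, p.2.2]; omega
        · rw [cns_zero]; omega⟩
      left_inv := fun α => by
        have h := (hmem α.1).mp α.2
        have hd := binWeight_decomp α.1
        apply Subtype.ext
        simp only
        have h0 : n - 2 * binWeight (tl α.1) = α.1 0 := by omega
        rw [h0, cns_tl]
      right_inv := fun p => by
        rcases p with ⟨⟨k, hk⟩, ⟨β, hβ⟩⟩
        apply Sigma.subtype_ext
        · apply Fin.ext
          simp only [tl_cns, hβ]
        · simp only [tl_cns] }
  haveI hfin : ∀ k : ℕ, Finite {β : ℕ →₀ ℕ // binWeight β = k} := fun k =>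
    Set.finite_coe_iff.mpr (setOf_finite k)
  haveI : ∀ k : Fin (n / 2 + 1), Fintype {β : ℕ →₀ ℕ // binWeight β = (k : ℕ)} := fun k =>
    @Fintype.ofFinite _ (hfin k)
  rw [r, Nat.card_congr e, Nat.card_eq_fintype_card, Fintype.card_sigma]
  rw [← Fin.sum_univ_eq_sum_range (fun k => b k) (n / 2 + 1)]
  refine Finset.sum_congr rfl fun k _ => ?_
  rw [Fintype.card_eq_nat_card]
  rfl
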